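/- Let ρ be a d-dimensional density matrix with eigenvalues λ_k and eigenvectors |ψ_k⟩, and suppose all eigenvalues in the support of a projector Π (onto eigenstates with λ_k ≥ μ > 0) are at least μ. Define J̃_{ij} = 2 Σ_{(k,l): λ_k≥μ or λ_l≥μ} Re[⟨ψ_k|∂_i ρ|ψ_l⟩⟨ψ_l|∂_j ρ|ψ_k⟩]/(λ_k+λ_l) and K̃_{ij} = 4 Σ_{(k,l): λ_k≥μ or λ_l≥μ} Re[⟨ψ_k|∂_i ρ|ψ_l⟩⟨ψ_l|∂_j ρ|ψ_k⟩]/(λ_k+λ_l)². Then K̃ ⪯ (2/μ) J̃ as real symmetric matrices. -/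

import Mathlib

open Matrix

private lemma herm_conj_swap {d : ℕ} (H : Matrix (Fin d) (Fin d) ℂ) (hH : H.IsHermitian)
    (u v : Fin d → ℂ) :
    star v ⬝ᵥ (H *ᵥ u) = starRingEnd ℂ (star u ⬝ᵥ (H *ᵥ v)) := by
  simp only [dotProduct, mulVec, Pi.star_apply, map_sum, _root_.map_mul, RCLike.star_def,
    Finset.mul_sum, Complex.conj_conj]
  rw [Finset.sum_comm]
  refine Finset.sum_congr rfl fun b _ => Finset.sum_congr rfl fun c _ => ?_
  rw [← hH.apply c b]
  simp only [RCLike.star_def]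
  ring


/-- For a density matrix with spectral data `{λ_k, |ψ_k⟩}` and a threshold
`μ > 0`, the matrices
`J̃_{ij} = 2Σ_{(k,l):λ_k≥μ ∨ λ_l≥μ} Re[⟨ψ_k|∂_iρ|ψ_l⟩⟨ψ_l|∂_jρ|ψ_k⟩]/(λ_k+λ_l)`
and
`K̃_{ij} = 4Σ_{(k,l):λ_k≥μ ∨ λ_l≥μ} Re[⟨ψ_k|∂_iρ|ψ_l⟩⟨ψ_l|∂_jρ|ψ_k⟩]/(λ_k+λ_l)²`
satisfy `K̃ ⪯ (2/μ)J̃`. -/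
theorem stmt7 {d m : ℕ} (μ : ℝ) (hμ : 0 < μ)
    (lam : Fin d → ℝ) (ψk : Fin d → Fin d → ℂ)
    (hlam_nonneg : ∀ k, 0 ≤ lam k) (hlam_sum : ∑ k, lam k = 1)
    (horth : ∀ k l, star (ψk k) ⬝ᵥ ψk l = if k = l then 1 else 0)
    (dρ : Fin m → Matrix (Fin d) (Fin d) ℂ)
    (hherm : ∀ i, (dρ i).IsHermitian)
    (Ktilde Jtilde : Matrix (Fin m) (Fin m) ℝ)
    (hK : ∀ i j, Ktilde i j = 4 * ∑ k, ∑ l, if μ ≤ lam k ∨ μ ≤ lam l then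
        ((star (ψk k) ⬝ᵥ (dρ i *ᵥ ψk l)) *
          (star (ψk l) ⬝ᵥ (dρ j *ᵥ ψk k))).re / (lam k + lam l) ^ 2 else 0)
    (hJ : ∀ i j, Jtilde i j = 2 * ∑ k, ∑ l, if μ ≤ lam k ∨ μ ≤ lam l then
        ((star (ψk k) ⬝ᵥ (dρ i *ᵥ ψk l)) *
          (star (ψk l) ⬝ᵥ (dρ j *ᵥ ψk k))).re / (lam k + lam l) else 0) :
    ((2 / μ) • Jtilde - Ktilde).PosSemidef := by
  set a : Fin m → Fin d → Fin d → ℂ := fun i k l => star (ψk k) ⬝ᵥ (dρ i *ᵥ ψk l) with ha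
  have haconj : ∀ i k l, a i l k = starRingEnd ℂ (a i k l) := fun i k l =>
    herm_conj_swap (dρ i) (hherm i) (ψk k) (ψk l)
  set P : Fin d → Fin d → Prop := fun k l => μ ≤ lam k ∨ μ ≤ lam l with hP
  set F : Fin d → Fin d → ℝ := fun k l =>
    4 / (μ * (lam k + lam l)) - 4 / (lam k + lam l) ^ 2 with hF
  have hs : ∀ k l, P k l → μ ≤ lam k + lam l := by
    intro k l hp
    rcases hp with h | h
    · linarith [hlam_nonneg l]
    · linarith [hlam_nonneg k]
  have hFnn : ∀ k l, P k l → 0 ≤ F k l := by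
    intro k l hp
    have hμs := hs k l hp
    have hspos : 0 < lam k + lam l := lt_of_lt_of_le hμ hμs
    have h1 : 4 / (lam k + lam l) ^ 2 ≤ 4 / (μ * (lam k + lam l)) := by
      apply div_le_div_of_nonneg_left (by norm_num) (by positivity)
      calc μ * (lam k + lam l) ≤ (lam k + lam l) * (lam k + lam l) :=
            mul_le_mul_of_nonneg_right hμs (le_of_lt hspos)
        _ = (lam k + lam l) ^ 2 := by ring
    simp only [hF]
    linarith
  -- L1 : combined entries
  have L1 : ∀ i j, (2 / μ) * Jtilde i j - Ktilde i j =
      ∑ k, ∑ l, if P k l then F k l * (a i k l * a j l k).re else 0 := by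
    intro i j
    rw [hJ, hK, ← mul_assoc, Finset.mul_sum, Finset.mul_sum, ← Finset.sum_sub_distrib]
    refine Finset.sum_congr rfl fun k _ => ?_
    rw [Finset.mul_sum, Finset.mul_sum, ← Finset.sum_sub_distrib]
    refine Finset.sum_congr rfl fun l _ => ?_
    by_cases hp : P k l
    · simp only [hP] at hp
      simp only [hp, if_true, hF, hP]
      have hspos : (0:ℝ) < lam k + lam l := lt_of_lt_of_le hμ (hs k l hp)
      field_simp
      ring
    · have hp' : ¬(μ ≤ lam k ∨ μ ≤ lam l) := hp
      simp [hp', hp]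
  have swap3 : ∀ (g : Fin m → Fin d → Fin d → ℝ),
      ∑ j, ∑ k, ∑ l, g j k l = ∑ k, ∑ l, ∑ j, g j k l := by
    intro g
    rw [Finset.sum_comm]
    exact Finset.sum_congr rfl fun k _ => Finset.sum_comm
  refine posSemidef_iff_dotProduct_mulVec.mpr ⟨?_, ?_⟩
  · -- Hermitian
    ext i j
    simp only [conjTranspose_apply, Matrix.sub_apply, Matrix.smul_apply, smul_eq_mul,
      star_trivial]
    rw [show (2/μ) * Jtilde j i - Ktilde j i = _ from L1 j i,
      show (2/μ) * Jtilde i j - Ktilde i j = _ from L1 i j]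
    rw [Finset.sum_comm]
    refine Finset.sum_congr rfl fun k _ => Finset.sum_congr rfl fun l _ => ?_
    refine if_congr or_comm ?_ rfl
    simp only [hF]
    rw [add_comm (lam l) (lam k), mul_comm (a j l k) (a i k l)]
  · intro x
    have expand : star x ⬝ᵥ (((2 / μ) • Jtilde - Ktilde) *ᵥ x)
        = ∑ i, ∑ j, x i * x j * ((2 / μ) * Jtilde i j - Ktilde i j) := by
      simp only [mulVec, dotProduct, Matrix.sub_apply, Matrix.smul_apply, smul_eq_mul,
        Pi.star_apply, star_trivial, Finset.mul_sum]
      exact Finset.sum_congr rfl fun i _ => Finset.sum_congr rfl fun j _ => by ring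
    rw [expand]
    have step2 : ∀ i j, x i * x j * ((2 / μ) * Jtilde i j - Ktilde i j)
        = ∑ k, ∑ l, if P k l then F k l * (x i * x j * (a i k l * a j l k).re) else 0 := by
      intro i j
      rw [L1 i j, Finset.mul_sum]
      refine Finset.sum_congr rfl fun k _ => ?_
      rw [Finset.mul_sum]
      refine Finset.sum_congr rfl fun l _ => ?_
      rw [mul_ite, mul_zero]
      exact if_congr Iff.rfl (by ring) rfl
    simp only [step2]
    have L2 : ∀ k l, ∑ i, ∑ j, x i * x j * (a i k l * a j l k).re
        = Complex.normSq (∑ i, (x i : ℂ) * a i k l) := by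
      intro k l
      have hprod : (∑ i, (x i : ℂ) * a i k l) * starRingEnd ℂ (∑ j, (x j : ℂ) * a j k l)
          = ∑ i, ∑ j, ((x i * x j : ℝ) : ℂ) * (a i k l * a j l k) := by
        rw [map_sum, Finset.sum_mul_sum]
        refine Finset.sum_congr rfl fun i _ => Finset.sum_congr rfl fun j _ => ?_
        rw [_root_.map_mul, Complex.conj_ofReal, ← haconj]
        push_cast
        ring
      have hns : Complex.normSq (∑ i, (x i : ℂ) * a i k l)
          = ((∑ i, (x i : ℂ) * a i k l)
              * starRingEnd ℂ (∑ j, (x j : ℂ) * a j k l)).re := by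
        rw [Complex.mul_conj, Complex.ofReal_re]
      rw [hns, hprod, Complex.re_sum]
      refine Finset.sum_congr rfl fun i _ => ?_
      rw [Complex.re_sum]
      exact Finset.sum_congr rfl fun j _ => by rw [Complex.re_ofReal_mul]
    calc (0:ℝ) ≤ ∑ k, ∑ l, if P k l then F k l * Complex.normSq (∑ i, (x i : ℂ) * a i k l)
            else 0 := by
          refine Finset.sum_nonneg fun k _ => Finset.sum_nonneg fun l _ => ?_
          by_cases hp : P k l
          · simp only [hp, if_true]
            exact mul_nonneg (hFnn k l hp) (Complex.normSq_nonneg _)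
          · simp [hp]
      _ = ∑ k, ∑ l, ∑ i, ∑ j,
            (if P k l then F k l * (x i * x j * (a i k l * a j l k).re) else 0) := by
          refine Finset.sum_congr rfl fun k _ => Finset.sum_congr rfl fun l _ => ?_
          by_cases hp : P k l
          · simp only [hp, if_true]
            rw [← L2 k l, Finset.mul_sum]
            refine Finset.sum_congr rfl fun i _ => ?_
            rw [Finset.mul_sum]
          · simp [hp]
      _ = ∑ i, ∑ j, ∑ k, ∑ l,
            (if P k l then F k l * (x i * x j * (a i k l * a j l k).re) else 0) := by
          rw [← swap3 (fun i k l => ∑ j,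
            if P k l then F k l * (x i * x j * (a i k l * a j l k).re) else 0)]
          exact Finset.sum_congr rfl fun i _ => (swap3 fun j k l =>
            if P k l then F k l * (x i * x j * (a i k l * a j l k).re) else 0).symm
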